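/- Let k ≥ 1 and let ψ be any vertex coloring of the parametric gadget T_k satisfying, for every i ∈ {1,…,k}: ψ(v_{i,1}) = ψ(v'_{i,4}), ψ(v_{i,3}) = ψ(v'_{i,1}), and ψ(v_{i,4}) = ψ(v'_{i,3}). Then for every vertex rainbow path R from v_s to v_t in T_k, there is no pair of vertices v_{ℓ,i} and v'_{ℓ',j} both lying on R with 1 ≤ i ≤ j ≤ 4 and ℓ, ℓ' ∈ {1,…,k}. -/

import Mathlib

open SimpleGraph

/-- The internal vertices of a walk: its support with the two endpoints removed. -/
def internalVerts {V : Type} {G : SimpleGraph V} {u v : V} (p : G.Walk u v) : List V :=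
  p.support.tail.dropLast

/-- A walk/path is *vertex rainbow* under the vertex coloring `ψ` if all of its internal
vertices have pairwise distinct colors. -/
def IsVertexRainbow {V C : Type} {G : SimpleGraph V} (ψ : V → C) {u v : V}
    (p : G.Walk u v) : Prop :=
  ((internalVerts p).map ψ).Nodup

/-- `G` is rainbow vertex connected under `ψ` if every pair of distinct vertices is joined
by a vertex rainbow path. -/
def RainbowVertexConnected {V C : Type} (G : SimpleGraph V) (ψ : V → C) : Prop :=
  ∀ u v : V, u ≠ v → ∃ p : G.Walk u v, p.IsPath ∧ IsVertexRainbow ψ p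

/-- `G` is strongly rainbow vertex connected under `ψ` if every pair of distinct vertices is
joined by a shortest path that is vertex rainbow. -/
def StrongRainbowVertexConnected {V C : Type} (G : SimpleGraph V) (ψ : V → C) : Prop :=
  ∀ u v : V, u ≠ v →
    ∃ p : G.Walk u v, p.IsPath ∧ p.length = G.dist u v ∧ IsVertexRainbow ψ p

/-- The rainbow vertex connection number: the least `k` such that some coloring with `k`
colors makes `G` rainbow vertex connected. -/
noncomputable def rvc {V : Type} (G : SimpleGraph V) : ℕ :=
  sInf {k : ℕ | ∃ ψ : V → Fin k, RainbowVertexConnected G ψ}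

/-- The strong rainbow vertex connection number: the least `k` such that some coloring with
`k` colors makes `G` strongly rainbow vertex connected. -/
noncomputable def srvc {V : Type} (G : SimpleGraph V) : ℕ :=
  sInf {k : ℕ | ∃ ψ : V → Fin k, StrongRainbowVertexConnected G ψ}

/-- Vertices of the parametric gadget `T_k`: the endpoints `v_s`, `v_t`, the left path
vertices `v_{i,ℓ}` and the right path vertices `v'_{i,ℓ}` (`i ∈ {1,…,k}`, `ℓ ∈ {1,…,4}`,
here 0-indexed). -/
inductive TkV (k : ℕ) : Type
  | vs : TkV k
  | vt : TkV k
  | left : Fin k → Fin 4 → TkV k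
  | right : Fin k → Fin 4 → TkV k
deriving DecidableEq

/-- The lexicographic position of `v_{i,ℓ}` along its side of the gadget. -/
def lexIdx {k : ℕ} (i : Fin k) (l : Fin 4) : ℕ := 4 * i.val + l.val

/-- The adjacency relation generating `T_k`: the left `v_s`–`v_t` path through all
`v_{i,ℓ}` in lexicographic order, the right `v_s`–`v_t` path through all `v'_{i,ℓ}`, and
for each `i` the four chords `(v_{i,1}, v'_{i,2})`, `(v_{i,2}, v'_{i,1})`,
`(v_{i,3}, v'_{i,4})`, `(v_{i,4}, v'_{i,3})` (0-indexed below). -/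
def TkRel (k : ℕ) : TkV k → TkV k → Prop
  | .vs, .left i l => lexIdx i l = 0
  | .vs, .right i l => lexIdx i l = 0
  | .left i l, .vt => lexIdx i l = 4 * k - 1
  | .right i l, .vt => lexIdx i l = 4 * k - 1
  | .left i l, .left i' l' => lexIdx i' l' = lexIdx i l + 1
  | .right i l, .right i' l' => lexIdx i' l' = lexIdx i l + 1
  | .left i l, .right i' l' => i = i' ∧
      ((l.val = 0 ∧ l'.val = 1) ∨ (l.val = 1 ∧ l'.val = 0) ∨
       (l.val = 2 ∧ l'.val = 3) ∨ (l.val = 3 ∧ l'.val = 2))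
  | _, _ => False

/-- The parametric gadget `T_k`: a cycle of length `8k + 2` together with `4k` chords. -/
def Tk (k : ℕ) : SimpleGraph (TkV k) := SimpleGraph.fromRel (TkRel k)


lemma nbr_right {k : ℕ} {i : Fin k} {y : TkV k} (h : (Tk k).Adj (.right i 1) y) :
    y = .left i 0 ∨ (∃ i2 : Fin k, ∃ l2 : Fin 4,
      y = .right i2 l2 ∧ (4*i2.val+l2.val = 4*i.val ∨ 4*i2.val+l2.val = 4*i.val+2)) := by
  have e1 : ((1 : Fin 4)).val = 1 := rfl
  have hi := i.2
  rw [Tk, fromRel_adj] at h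
  obtain ⟨hne, hrel⟩ := h
  cases y with
  | vs =>
    exfalso
    rcases hrel with h | h <;> simp only [TkRel, lexIdx] at h
    omega
  | vt =>
    exfalso
    rcases hrel with h | h <;> simp only [TkRel, lexIdx] at h
    omega
  | left i' l' =>
    rcases hrel with h | h <;> simp only [TkRel, lexIdx] at h
    obtain ⟨rfl, h⟩ := h
    left
    have : l'.val = 0 := by omega
    have : l' = 0 := Fin.ext this
    rw [this]
  | right i' l' =>
    right
    rcases hrel with h | h <;> simp only [TkRel, lexIdx] at h <;>
      exact ⟨i', l', rfl, by omega⟩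

lemma nbr_left {k : ℕ} {i : Fin k} {y : TkV k} (hk : 1 ≤ k) (h : (Tk k).Adj (.left i 1) y) :
    y = .right i 0 ∨ (∃ i2 : Fin k, ∃ l2 : Fin 4,
      y = .left i2 l2 ∧ (4*i2.val+l2.val = 4*i.val ∨ 4*i2.val+l2.val = 4*i.val+2)) := by
  have e1 : ((1 : Fin 4)).val = 1 := rfl
  have hi := i.2
  rw [Tk, fromRel_adj] at h
  obtain ⟨hne, hrel⟩ := h
  cases y with
  | vs =>
    exfalso
    rcases hrel with h | h <;> simp only [TkRel, lexIdx] at h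
    omega
  | vt =>
    exfalso
    rcases hrel with h | h <;> simp only [TkRel, lexIdx] at h
    omega
  | right i' l' =>
    rcases hrel with h | h <;> simp only [TkRel, lexIdx] at h
    obtain ⟨rfl, h⟩ := h
    left
    have : l'.val = 0 := by omega
    have : l' = 0 := Fin.ext this
    rw [this]
  | left i' l' =>
    right
    rcases hrel with h | h <;> simp only [TkRel, lexIdx] at h <;>
      exact ⟨i', l', rfl, by omega⟩

def pos {k : ℕ} : TkV k → ℕ
  | .vs => 0
  | .vt => 4*k+1
  | .left i l => lexIdx i l + 1
  | .right i l => lexIdx i l + 1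

def vert {k : ℕ} (b : Bool) (c : ℕ) : TkV k :=
  if h : c < 4*k then
    match b with
    | true => TkV.left ⟨c/4, by omega⟩ ⟨c % 4, by omega⟩
    | false => TkV.right ⟨c/4, by omega⟩ ⟨c % 4, by omega⟩
  else .vs

lemma vert_true_eq {k : ℕ} (i : Fin k) (l : Fin 4) :
    (vert true (4*i.val + l.val) : TkV k) = TkV.left i l := by
  have hi := i.2; have hl := l.2
  have h : 4*i.val + l.val < 4*k := by omega
  simp only [vert, dif_pos h]
  congr 1 <;> (apply Fin.ext; simp only [Fin.val_mk]; omega)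

lemma vert_false_eq {k : ℕ} (i : Fin k) (l : Fin 4) :
    (vert false (4*i.val + l.val) : TkV k) = TkV.right i l := by
  have hi := i.2; have hl := l.2
  have h : 4*i.val + l.val < 4*k := by omega
  simp only [vert, dif_pos h]
  congr 1 <;> (apply Fin.ext; simp only [Fin.val_mk]; omega)

lemma posAdj {k : ℕ} {a b : TkV k} (h : (Tk k).Adj a b) :
    pos a + 1 = pos b ∨ pos b + 1 = pos a := by
  rw [Tk, fromRel_adj] at h
  obtain ⟨-, h | h⟩ := h <;>
  · cases a <;> cases b <;> simp only [TkRel, lexIdx, pos] at h ⊢ <;>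
      omega

lemma crossing {k : ℕ} {u v : TkV k} (w : (Tk k).Walk u v) (n : ℕ)
    (h1 : pos u ≤ n) (h2 : n < pos v) :
    ∃ a b, s(a,b) ∈ w.edges ∧ pos a = n ∧ pos b = n + 1 := by
  induction w with
  | nil => omega
  | @cons x y z h p ih =>
    rcases posAdj h with hp | hp
    · by_cases hy : pos y ≤ n
      · obtain ⟨a, b, he, ha, hb⟩ := ih hy h2
        exact ⟨a, b, by simp [he], ha, hb⟩
      · exact ⟨x, y, by simp, by omega, by omega⟩
    · obtain ⟨a, b, he, ha, hb⟩ := ih (by omega) h2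
      exact ⟨a, b, by simp [he], ha, hb⟩

lemma lexIdx_lt {k : ℕ} (i : Fin k) (l : Fin 4) : lexIdx i l < 4*k := by
  have := i.2; have := l.2; unfold lexIdx; omega

lemma classify {k : ℕ} (hk : 1 ≤ k) {a b : TkV k} (hadj : (Tk k).Adj a b)
    {m : ℕ} (ha : pos a = 2*m) (hb : pos b = 2*m+1) :
    ∃ s : Bool, (m < 2*k → b = vert s (2*m)) ∧ (1 ≤ m → a = vert s (2*m-1)) := by
  rw [Tk, fromRel_adj] at hadj
  obtain ⟨hne, hrel⟩ := hadj
  cases a with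
  | vs =>
    simp only [pos] at ha
    cases b with
    | vs => exact absurd rfl hne
    | vt => simp only [pos] at hb; omega
    | left i l =>
      refine ⟨true, fun _ => ?_, by omega⟩
      simp only [pos] at hb
      have : 2*m = 4*i.val + l.val := by unfold lexIdx at hb; omega
      rw [this, vert_true_eq]
    | right i l =>
      refine ⟨false, fun _ => ?_, by omega⟩
      simp only [pos] at hb
      have : 2*m = 4*i.val + l.val := by unfold lexIdx at hb; omega
      rw [this, vert_false_eq]
  | vt =>
    have hc := lexIdx_lt (k := k)
    cases b <;> simp only [pos] at ha hb <;>
      first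
        | omega
        | (rename_i i l; have := lexIdx_lt i l; omega)
  | left i l =>
    have hil := lexIdx_lt i l
    cases b with
    | vs => simp only [pos] at hb; omega
    | vt =>
      refine ⟨true, by simp only [pos] at hb; omega, fun _ => ?_⟩
      simp only [pos] at ha
      have : 2*m-1 = 4*i.val + l.val := by unfold lexIdx at ha; omega
      rw [this, vert_true_eq]
    | left i' l' =>
      refine ⟨true, fun _ => ?_, fun _ => ?_⟩
      · simp only [pos] at hb
        have : 2*m = 4*i'.val + l'.val := by unfold lexIdx at hb; omega
        rw [this, vert_true_eq]
      · simp only [pos] at ha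
        have : 2*m-1 = 4*i.val + l.val := by unfold lexIdx at ha; omega
      
        rw [this, vert_true_eq]
    | right i' l' =>
      exfalso
      simp only [pos] at ha hb
      rcases hrel with h | h <;> simp only [TkRel] at h
      obtain ⟨rfl, h⟩ := h
      unfold lexIdx at ha hb
      omega
  | right i l =>
    have hil := lexIdx_lt i l
    cases b with
    | vs => simp only [pos] at hb; omega
    | vt =>
      refine ⟨false, by simp only [pos] at hb; omega, fun _ => ?_⟩
      simp only [pos] at ha
      have : 2*m-1 = 4*i.val + l.val := by unfold lexIdx at ha; omega
      rw [this, vert_false_eq]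
    | right i' l' =>
      refine ⟨false, fun _ => ?_, fun _ => ?_⟩
      · simp only [pos] at hb
        have : 2*m = 4*i'.val + l'.val := by unfold lexIdx at hb; omega
        rw [this, vert_false_eq]
      · simp only [pos] at ha
        have : 2*m-1 = 4*i.val + l.val := by unfold lexIdx at ha; omega
        rw [this, vert_false_eq]
    | left i' l' =>
      exfalso
      simp only [pos] at ha hb
      rcases hrel with h | h <;> simp only [TkRel] at h
      obtain ⟨rfl, h⟩ := h
      unfold lexIdx at ha hb
      omega

lemma two_edges {V : Type} {G : SimpleGraph V} {u v x : V} (p : G.Walk u v) (hp : p.IsPath)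
    (hx : x ∈ p.support) (hu : x ≠ u) (hv : x ≠ v) :
    ∃ y z : V, y ≠ z ∧ s(x,y) ∈ p.edges ∧ s(x,z) ∈ p.edges := by
  obtain ⟨q, r, rfl⟩ := SimpleGraph.Walk.mem_support_iff_exists_append.mp hx
  have hqn : ¬ q.Nil := by
    intro h
    cases q with
    | nil => exact hu rfl
    | cons h' q' => simp [SimpleGraph.Walk.Nil] at h
  have hrn : ¬ r.Nil := by
    intro h
    cases r with
    | nil => exact hv rfl
    | cons h' r' => simp [SimpleGraph.Walk.Nil] at h
  obtain ⟨y, hadjr, r', rfl⟩ := SimpleGraph.Walk.not_nil_iff.mp hrn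
  have hqrev : ¬ q.reverse.Nil := by
    rw [SimpleGraph.Walk.nil_iff_length_eq, SimpleGraph.Walk.length_reverse]
    rw [SimpleGraph.Walk.nil_iff_length_eq] at hqn
    exact hqn
  obtain ⟨z, hadjq, q', hq'⟩ := SimpleGraph.Walk.not_nil_iff.mp hqrev
  refine ⟨z, y, ?_, ?_, ?_⟩
  · -- if z = y, support has duplicates
    rintro rfl
    have hzq : z ∈ q.support := by
      have : z ∈ q.reverse.support := by rw [hq']; simp
      simpa using this
    have hzr : z ∈ r'.support := SimpleGraph.Walk.start_mem_support r'
    have hnd := hp.support_nodup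
    rw [SimpleGraph.Walk.support_append] at hnd
    rw [List.nodup_append] at hnd
    exact hnd.2.2 z hzq z (by simp [hzr]) rfl
  · have : s(x,z) ∈ q.reverse.edges := by rw [hq']; simp
    rw [SimpleGraph.Walk.edges_reverse] at this
    rw [SimpleGraph.Walk.edges_append]
    simp only [List.mem_append]
    exact Or.inl (by simpa using this)
  · rw [SimpleGraph.Walk.edges_append]
    simp

lemma mem_internal {V : Type} {G : SimpleGraph V} {u v : V} (p : G.Walk u v)
    {x : V} (hx : x ∈ p.support) (h1 : x ≠ u) (h2 : x ≠ v) :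
    x ∈ internalVerts p := by
  have hsup : p.support = u :: p.support.tail := p.support_eq_cons
  have hxt : x ∈ p.support.tail := by
    rw [hsup] at hx
    rcases List.mem_cons.mp hx with h | h
    · exact absurd h h1
    · exact h
  have htne : p.support.tail ≠ [] := by
    intro h
    rw [h] at hxt
    simp at hxt
  have key : ∀ (l : List V) (hne : l ≠ []), l = p.support → l.getLast hne = v := by
    rintro l hne rfl
    exact p.getLast_support
  have hlast : p.support.tail.getLast htne = v := by
    rw [← List.getLast_cons (h := htne)]
    exact key _ (by simp) hsup.symm
  unfold internalVerts
  have := List.dropLast_append_getLast htne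
  rw [← this] at hxt
  rcases List.mem_append.mp hxt with h | h
  · exact h
  · simp only [List.mem_singleton] at h
    rw [hlast] at h
    exact absurd h h2


/-- For any coloring of `T_k` with `ψ(v_{i,1}) = ψ(v'_{i,4})`, `ψ(v_{i,3}) = ψ(v'_{i,1})`
and `ψ(v_{i,4}) = ψ(v'_{i,3})` for all `i`, no vertex rainbow `v_s`–`v_t` path contains
both a left vertex `v_{ℓ,i}` and a right vertex `v'_{ℓ',j}` with `i ≤ j`. -/
theorem stmt15 {C : Type} (k : ℕ) (hk : 1 ≤ k) (ψ : TkV k → C)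
    (h1 : ∀ i : Fin k, ψ (.left i 0) = ψ (.right i 3))
    (h2 : ∀ i : Fin k, ψ (.left i 2) = ψ (.right i 0))
    (h3 : ∀ i : Fin k, ψ (.left i 3) = ψ (.right i 2)) :
    ∀ R : (Tk k).Walk .vs .vt, R.IsPath → IsVertexRainbow ψ R →
      ¬ ∃ (l l' : Fin k) (i j : Fin 4), i ≤ j ∧
          TkV.left l i ∈ R.support ∧ TkV.right l' j ∈ R.support := by
  intro R hpath hrb
  rintro ⟨l, l', i, j, hij, hL, hR⟩
  have clash : ∀ x y : TkV k, x ∈ R.support → y ∈ R.support → x ≠ y → ψ x = ψ y →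
      x ≠ .vs → x ≠ .vt → y ≠ .vs → y ≠ .vt → False := by
    intro x y hx hy hxy hc hx1 hx2 hy1 hy2
    exact hxy (List.inj_on_of_nodup_map hrb (mem_internal R hx hx1 hx2)
      (mem_internal R hy hy1 hy2) hc)
  have cross : ∀ m : ℕ, ∃ s : Bool, (m < 2*k → (vert s (2*m) : TkV k) ∈ R.support) ∧
      (1 ≤ m → m ≤ 2*k → (vert s (2*m-1) : TkV k) ∈ R.support) := by
    intro m
    by_cases hm : m ≤ 2*k
    · obtain ⟨a, b, he, ha, hb⟩ := crossing R (2*m) (by simp [pos]) (by simp [pos]; omega)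
      obtain ⟨s, hb', ha'⟩ := classify hk (R.adj_of_mem_edges he) ha hb
      refine ⟨s, fun h => ?_, fun h _ => ?_⟩
      · rw [← hb' h]; exact R.snd_mem_support_of_mem_edges he
      · rw [← ha' h]; exact R.fst_mem_support_of_mem_edges he
    · exact ⟨true, fun h => absurd (by omega : m ≤ 2*k) hm, fun _ h' => absurd h' hm⟩
  choose side hs1 hs2 using cross
  have memT : ∀ (c : ℕ) (i2 : Fin k) (l2 : Fin 4), 4*i2.val+l2.val = 2*c → c < 2*k →
      side c = true → TkV.left i2 l2 ∈ R.support := by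
    intro c i2 l2 hc hlt hs
    have h := hs1 c hlt
    rw [hs, ← hc, vert_true_eq] at h
    exact h
  have memF : ∀ (c : ℕ) (i2 : Fin k) (l2 : Fin 4), 4*i2.val+l2.val = 2*c → c < 2*k →
      side c = false → TkV.right i2 l2 ∈ R.support := by
    intro c i2 l2 hc hlt hs
    have h := hs1 c hlt
    rw [hs, ← hc, vert_false_eq] at h
    exact h
  have memT2 : ∀ (c : ℕ) (i2 : Fin k) (l2 : Fin 4), 4*i2.val+l2.val = 2*c-1 → 1 ≤ c →
      c ≤ 2*k → side c = true → TkV.left i2 l2 ∈ R.support := by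
    intro c i2 l2 hc h1c h2c hs
    have h := hs2 c h1c h2c
    rw [hs, ← hc, vert_true_eq] at h
    exact h
  have memF2 : ∀ (c : ℕ) (i2 : Fin k) (l2 : Fin 4), 4*i2.val+l2.val = 2*c-1 → 1 ≤ c →
      c ≤ 2*k → side c = false → TkV.right i2 l2 ∈ R.support := by
    intro c i2 l2 hc h1c h2c hs
    have h := hs2 c h1c h2c
    rw [hs, ← hc, vert_false_eq] at h
    exact h
  have c0 : ((0 : Fin 4)).val = 0 := rfl
  have c1 : ((1 : Fin 4)).val = 1 := rfl
  have c2 : ((2 : Fin 4)).val = 2 := rfl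
  have c3 : ((3 : Fin 4)).val = 3 := rfl
  -- the three clash constraints on boundary sides
  have K1 : ∀ (i2 : ℕ) (hi : i2 < k),
      ¬(side (2*i2) = false ∧ side (2*i2+1) = true) := by
    rintro i2 hi ⟨e0, e1⟩
    refine clash (TkV.left ⟨i2,hi⟩ 2) (TkV.right ⟨i2,hi⟩ 0) ?_ ?_ (by simp) (h2 ⟨i2,hi⟩)
      (by simp) (by simp) (by simp) (by simp)
    · exact memT (2*i2+1) ⟨i2,hi⟩ 2 (by simp only [c2]; omega) (by omega) e1
    · exact memF (2*i2) ⟨i2,hi⟩ 0 (by simp only [c0]; omega) (by omega) e0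
  have K2 : ∀ (i2 : ℕ) (hi : i2 < k),
      ¬(side (2*i2+1) = false ∧ side (2*i2+2) = true) := by
    rintro i2 hi ⟨e0, e1⟩
    refine clash (TkV.left ⟨i2,hi⟩ 3) (TkV.right ⟨i2,hi⟩ 2) ?_ ?_ (by simp) (h3 ⟨i2,hi⟩)
      (by simp) (by simp) (by simp) (by simp)
    · exact memT2 (2*i2+2) ⟨i2,hi⟩ 3 (by simp only [c3]; omega) (by omega) (by omega) e1
    · exact memF (2*i2+1) ⟨i2,hi⟩ 2 (by simp only [c2]; omega) (by omega) e0
  have K3 : ∀ (i2 : ℕ) (hi : i2 < k),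
      ¬(side (2*i2) = true ∧ side (2*i2+2) = false) := by
    rintro i2 hi ⟨e0, e1⟩
    refine clash (TkV.left ⟨i2,hi⟩ 0) (TkV.right ⟨i2,hi⟩ 3) ?_ ?_ (by simp) (h1 ⟨i2,hi⟩)
      (by simp) (by simp) (by simp) (by simp)
    · exact memT (2*i2) ⟨i2,hi⟩ 0 (by simp only [c0]; omega) (by omega) e0
    · exact memF2 (2*i2+2) ⟨i2,hi⟩ 3 (by simp only [c3]; omega) (by omega) (by omega) e1
  rcases (Bool.eq_false_or_eq_true (side 0)).symm with hs0 | hs0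
  · -- all boundaries on the right side; all right vertices are in the support
    have allF : ∀ m, m ≤ 2*k → side m = false := by
      intro m
      induction m with
      | zero => exact fun _ => hs0
      | succ n ih =>
        intro hn
        have hsn := ih (by omega)
        rcases Nat.even_or_odd n with ⟨i2, hi2⟩ | ⟨i2, hi2⟩
        · have hik : i2 < k := by omega
          rcases (Bool.eq_false_or_eq_true (side (n+1))).symm with h | h
          · exact h
          · exact absurd ⟨by rw [← hsn]; congr 1; omega, by rw [← h]; congr 1; omega⟩
              (K1 i2 hik)
        · have hik : i2 < k := by omega
          rcases (Bool.eq_false_or_eq_true (side (n+1))).symm with h | h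
          · exact h
          · exact absurd ⟨by rw [← hsn]; congr 1; omega, by rw [← h]; congr 1; omega⟩
              (K2 i2 hik)
    have covR : ∀ (i2 : Fin k) (l2 : Fin 4), TkV.right i2 l2 ∈ R.support := by
      intro i2 l2
      have hb1 := i2.2; have hb2 := l2.2
      rcases Nat.even_or_odd (4*i2.val+l2.val) with ⟨m, hm⟩ | ⟨m, hm⟩
      · exact memF m i2 l2 (by omega) (by omega) (allF m (by omega))
      · exact memF2 (m+1) i2 l2 (by omega) (by omega) (by omega) (allF (m+1) (by omega))
    -- use the left vertex on the path
    have hi4 := i.2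
    have key : ∀ w, s(TkV.left l 1, w) ∈ R.edges → w ≠ TkV.right l 0 → False := by
      intro w hw hwne
      rcases nbr_left hk (R.adj_of_mem_edges hw) with h | ⟨i2, l2, rfl, hc⟩
      · exact hwne h
      · have hwm : TkV.left i2 l2 ∈ R.support := R.snd_mem_support_of_mem_edges hw
        have hb2 := l2.2
        have hi2 : i2 = l := Fin.ext (by omega)
        subst hi2
        rcases hc with hc | hc
        · have hl2 : l2 = 0 := Fin.ext (by rw [c0]; omega)
          subst hl2
          exact clash (TkV.left i2 0) (TkV.right i2 3) hwm (covR i2 3) (by simp)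
            (h1 i2) (by simp) (by simp) (by simp) (by simp)
        · have hl2 : l2 = 2 := Fin.ext (by rw [c2]; omega)
          subst hl2
          exact clash (TkV.left i2 2) (TkV.right i2 0) hwm (covR i2 0) (by simp)
            (h2 i2) (by simp) (by simp) (by simp) (by simp)
    have hival : i.val = 0 ∨ i.val = 1 ∨ i.val = 2 ∨ i.val = 3 := by omega
    rcases hival with hiv | hiv | hiv | hiv
    · have : i = 0 := Fin.ext (by rw [c0]; omega)
      subst this
      exact clash (TkV.left l 0) (TkV.right l 3) hL (covR l 3) (by simp) (h1 l)
        (by simp) (by simp) (by simp) (by simp)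
    · have : i = 1 := Fin.ext (by rw [c1]; omega)
      subst this
      obtain ⟨y, z, hyz, hey, hez⟩ := two_edges R hpath hL (by simp) (by simp)
      by_cases hy : y = TkV.right l 0
      · exact key z hez (by rw [← hy] at *; exact fun h => hyz (hy.trans h.symm ▸ rfl))
      · exact key y hey hy
    · have : i = 2 := Fin.ext (by rw [c2]; omega)
      subst this
      exact clash (TkV.left l 2) (TkV.right l 0) hL (covR l 0) (by simp) (h2 l)
        (by simp) (by simp) (by simp) (by simp)
    · have : i = 3 := Fin.ext (by rw [c3]; omega)
      subst this
      exact clash (TkV.left l 3) (TkV.right l 2) hL (covR l 2) (by simp) (h3 l)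
        (by simp) (by simp) (by simp) (by simp)
  · -- all boundaries on the left side; all left vertices are in the support
    have evT : ∀ i2 : ℕ, 2*i2 ≤ 2*k → side (2*i2) = true := by
      intro i2
      induction i2 with
      | zero => exact fun _ => hs0
      | succ n ih =>
        intro hn
        have hsn := ih (by omega)
        have hik : n < k := by omega
        rcases (Bool.eq_false_or_eq_true (side (2*(n+1)))).symm with h | h
        · exact absurd ⟨hsn, by rw [show (2*n+2 : ℕ) = 2*(n+1) from by ring]; exact h⟩ (K3 n hik)
        · exact h
    have allT : ∀ m, m ≤ 2*k → side m = true := by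
      intro m hm
      rcases Nat.even_or_odd m with ⟨i2, hi2⟩ | ⟨i2, hi2⟩
      · rw [show m = 2*i2 from by omega]
        exact evT i2 (by omega)
      · have hik : i2 < k := by omega
        have hnext : side (2*i2+2) = true := by
          rw [show 2*i2+2 = 2*(i2+1) from by omega]
          exact evT (i2+1) (by omega)
        rcases (Bool.eq_false_or_eq_true (side m)).symm with h | h
        · exact absurd ⟨by rw [← h]; congr 1; omega, hnext⟩ (K2 i2 hik)
        · exact h
    have covL : ∀ (i2 : Fin k) (l2 : Fin 4), TkV.left i2 l2 ∈ R.support := by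
      intro i2 l2
      have hb1 := i2.2; have hb2 := l2.2
      rcases Nat.even_or_odd (4*i2.val+l2.val) with ⟨m, hm⟩ | ⟨m, hm⟩
      · exact memT m i2 l2 (by omega) (by omega) (allT m (by omega))
      · exact memT2 (m+1) i2 l2 (by omega) (by omega) (by omega) (allT (m+1) (by omega))
    have hj4 := j.2
    have key : ∀ w, s(TkV.right l' 1, w) ∈ R.edges → w ≠ TkV.left l' 0 → False := by
      intro w hw hwne
      rcases nbr_right (R.adj_of_mem_edges hw) with h | ⟨i2, l2, rfl, hc⟩
      · exact hwne h
      · have hwm : TkV.right i2 l2 ∈ R.support := R.snd_mem_support_of_mem_edges hw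
        have hb2 := l2.2
        have hi2 : i2 = l' := Fin.ext (by omega)
        subst hi2
        rcases hc with hc | hc
        · have hl2 : l2 = 0 := Fin.ext (by rw [c0]; omega)
          subst hl2
          exact clash (TkV.left i2 2) (TkV.right i2 0) (covL i2 2) hwm (by simp)
            (h2 i2) (by simp) (by simp) (by simp) (by simp)
        · have hl2 : l2 = 2 := Fin.ext (by rw [c2]; omega)
          subst hl2
          exact clash (TkV.left i2 3) (TkV.right i2 2) (covL i2 3) hwm (by simp)
            (h3 i2) (by simp) (by simp) (by simp) (by simp)
    have hjval : j.val = 0 ∨ j.val = 1 ∨ j.val = 2 ∨ j.val = 3 := by omega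
    rcases hjval with hjv | hjv | hjv | hjv
    · have : j = 0 := Fin.ext (by rw [c0]; omega)
      subst this
      exact clash (TkV.left l' 2) (TkV.right l' 0) (covL l' 2) hR (by simp) (h2 l')
        (by simp) (by simp) (by simp) (by simp)
    · have : j = 1 := Fin.ext (by rw [c1]; omega)
      subst this
      obtain ⟨y, z, hyz, hey, hez⟩ := two_edges R hpath hR (by simp) (by simp)
      by_cases hy : y = TkV.left l' 0
      · exact key z hez (by rw [← hy] at *; exact fun h => hyz (hy.trans h.symm ▸ rfl))
      · exact key y hey hy
    · have : j = 2 := Fin.ext (by rw [c2]; omega)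
      subst this
      exact clash (TkV.left l' 3) (TkV.right l' 2) (covL l' 3) hR (by simp) (h3 l')
        (by simp) (by simp) (by simp) (by simp)
    · have : j = 3 := Fin.ext (by rw [c3]; omega)
      subst this
      exact clash (TkV.left l' 0) (TkV.right l' 3) (covL l' 0) hR (by simp) (h1 l')
        (by simp) (by simp) (by simp) (by simp)
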